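/- (Hölder's theorem) Let G be a group equipped with an Archimedean left-invariant linear order <. Then there exists a map φ : G → ℝ satisfying φ(gh) = φ(g) + φ(h) for all g, h ∈ G, which is injective and strictly order-preserving (g < h implies φ(g) < φ(h)); in particular G is isomorphic, as an ordered group, to a subgroup of the additive reals with its usual order. -/

import Mathlib

set_option linter.unusedSectionVars false
set_option maxHeartbeats 1000000

section HolderAux

variable {G : Type*} [Group G] [LinearOrder G]

private theorem holder_biinv
    (hleft : ∀ f g h : G, g < h → f * g < f * h) :
    (∀ g h : G, 1 < g → 1 < h → ∃ n : ℕ, h < g ^ n) →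
      ∀ x c : G, 1 < x → 1 < c⁻¹ * x * c := by
  intro harch
  have hinv : ∀ u : G, u < 1 → 1 < u⁻¹ := fun u h => by
    have := hleft u⁻¹ u 1 h; rwa [inv_mul_cancel, mul_one] at this
  have hinv' : ∀ u : G, 1 < u → u⁻¹ < 1 := fun u h => by
    have := hleft u⁻¹ 1 u h; rwa [inv_mul_cancel, mul_one] at this
  have core : ∀ x c : G, 1 < x → 1 < c → ¬ c⁻¹ * x * c < 1 := by
    intro x c hx hc hbad
    have hxc : x * c < c := by
      have := hleft c _ _ hbad
      have e : c * (c⁻¹ * x * c) = x * c := by group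
      rwa [e, mul_one] at this
    have hpow : ∀ n : ℕ, x ^ (n + 1) * c < c := by
      intro n
      induction n with
      | zero => simpa using hxc
      | succ k ih =>
          have h2 := hleft x _ _ ih
          have e : x * (x ^ (k+1) * c) = x ^ (k + 2) * c := by
            rw [← mul_assoc, ← pow_succ']
          rw [e] at h2
          exact h2.trans hxc
    obtain ⟨n, hn⟩ := harch x c hx hc
    rcases n with _ | m
    · exact absurd hn (by simpa using not_lt.mpr hc.le)
    · have h1 : x ^ (m + 1) < x ^ (m + 1) * c := by
        have := hleft (x ^ (m+1)) 1 c hc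
        rwa [mul_one] at this
      exact lt_irrefl _ (h1.trans ((hpow m).trans hn))
  intro x c hx
  rcases lt_trichotomy (c⁻¹ * x * c) 1 with hlt | heq | hgt
  · exfalso
    rcases lt_trichotomy c 1 with hc | rfl | hc
    · have hc' : (1:G) < c⁻¹ := hinv c hc
      have hy : (1:G) < (c⁻¹ * x * c)⁻¹ := hinv _ hlt
      have hx' : x⁻¹ < 1 := hinv' x hx
      refine core _ c⁻¹ hy hc' ?_
      have e : (c⁻¹)⁻¹ * (c⁻¹ * x * c)⁻¹ * c⁻¹ = x⁻¹ := by group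
      rw [e]; exact hx'
    · rw [inv_one, one_mul, mul_one] at hlt
      exact absurd hx (not_lt.mpr hlt.le)
    · exact core x c hx hc hlt
  · exfalso
    have hx1 : x = 1 := by
      have e : x = c * (c⁻¹ * x * c) * c⁻¹ := by group
      rw [heq] at e; simpa using e
    exact absurd hx (by simp [hx1])
  · exact hgt

end HolderAux

section HolderAux2

variable {G : Type*} [Group G] [LinearOrder G]
  [CovariantClass G G (· * ·) (· ≤ ·)] [CovariantClass G G (Function.swap (· * ·)) (· ≤ ·)]
  [CovariantClass G G (· * ·) (· < ·)] [CovariantClass G G (Function.swap (· * ·)) (· < ·)]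

private theorem holder_zpow_lt {z : G} (hz : 1 < z) {k m : ℤ} (h : k < m) : z ^ k < z ^ m := by
  have h1 : (1:G) < z ^ (m - k) := by
    obtain ⟨n, hn⟩ := Int.eq_ofNat_of_zero_le (by omega : (0:ℤ) ≤ m - k)
    rw [hn, zpow_natCast]
    exact one_lt_pow' hz (by omega)
  calc z ^ k = z ^ k * 1 := (mul_one _).symm
    _ < z ^ k * z ^ (m - k) := mul_lt_mul_right h1 _
    _ = z ^ m := by rw [← zpow_add]; ring_nf

private theorem holder_zpow_le {z : G} (hz : 1 < z) {k m : ℤ} (h : k ≤ m) : z ^ k ≤ z ^ m := by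
  rcases eq_or_lt_of_le h with rfl | h
  · exact le_rfl
  · exact (holder_zpow_lt hz h).le

private theorem holder_log (harch : ∀ g h : G, 1 < g → 1 < h → ∃ n : ℕ, h < g ^ n)
    {z : G} (hz : 1 < z) (u : G) : ∃ k : ℤ, z ^ k ≤ u ∧ u < z ^ (k + 1) := by
  have hub : ∀ v : G, ∃ n : ℕ, v < z ^ (n : ℤ) := by
    intro v
    rcases le_or_gt v 1 with hv | hv
    · exact ⟨1, by norm_num [zpow_one]; exact lt_of_le_of_lt hv hz⟩
    · obtain ⟨n, hn⟩ := harch z v hz hv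
      exact ⟨n, by rwa [zpow_natCast]⟩
  obtain ⟨n, hn⟩ := hub u
  obtain ⟨m, hm⟩ := hub u⁻¹
  have hlow : z ^ (-(m:ℤ)) ≤ u := by
    have h3 : (1 : G) < u * z ^ (m:ℤ) := by
      have := mul_lt_mul_right hm u
      rwa [mul_inv_cancel] at this
    have h4 := mul_lt_mul_left h3 (z ^ (-(m:ℤ)))
    rw [one_mul, mul_assoc, ← zpow_add, add_neg_cancel, zpow_zero, mul_one] at h4
    exact h4.le
  obtain ⟨k, ⟨hk1, hk2⟩⟩ := Int.exists_greatest_of_bdd (P := fun k => z ^ k ≤ u)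
    ⟨n, fun j hj => by
      by_contra hb
      push_neg at hb
      exact absurd (lt_of_le_of_lt hj hn) (not_lt.mpr (holder_zpow_le hz (by omega)))⟩
    ⟨-(m:ℤ), hlow⟩
  refine ⟨k, hk1, ?_⟩
  by_contra hb
  push_neg at hb
  exact absurd (hk2 (k+1) hb) (by omega)


private theorem holder_K {g h : G} (hgh : h * g ≤ g * h) :
    ∀ k : ℕ, h * g ^ k ≤ g ^ k * h := by
  intro k
  induction k with
  | zero => simp
  | succ n ih =>
      calc h * g ^ (n+1) = (h * g ^ n) * g := by rw [mul_assoc, ← pow_succ]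
        _ ≤ (g ^ n * h) * g := mul_le_mul_left ih g
        _ = g ^ n * (h * g) := by rw [mul_assoc]
        _ ≤ g ^ n * (g * h) := mul_le_mul_right hgh _
        _ = g ^ (n+1) * h := by rw [← mul_assoc, ← pow_succ]

private theorem holder_K' {g h : G} (hgh : h * g ≤ g * h) :
    ∀ k : ℕ, h ^ k * g ≤ g * h ^ k := by
  intro k
  induction k with
  | zero => simp
  | succ n ih =>
      calc h ^ (n+1) * g = h * (h ^ n * g) := by rw [← mul_assoc, ← pow_succ']
        _ ≤ h * (g * h ^ n) := mul_le_mul_right ih _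
        _ = (h * g) * h ^ n := by rw [mul_assoc]
        _ ≤ (g * h) * h ^ n := mul_le_mul_left hgh _
        _ = g * h ^ (n+1) := by rw [mul_assoc, ← pow_succ']

private theorem holder_sandwich {g h : G} (hgh : h * g ≤ g * h) (n : ℕ) :
    (h ^ n * g ^ n ≤ (g * h) ^ n ∧ (g * h) ^ n ≤ g ^ n * h ^ n) ∧
    (h ^ n * g ^ n ≤ (h * g) ^ n ∧ (h * g) ^ n ≤ g ^ n * h ^ n) := by
  induction n with
  | zero => simp
  | succ n ih =>
      obtain ⟨⟨l1, u1⟩, l2, u2⟩ := ih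
      refine ⟨⟨?_, ?_⟩, ?_, ?_⟩
      · calc h ^ (n+1) * g ^ (n+1) = h * (h ^ n * g) * g ^ n := by
              rw [pow_succ' h, pow_succ' g]; group
          _ ≤ h * (g * h ^ n) * g ^ n := mul_le_mul_left (mul_le_mul_right (holder_K' hgh n) h) _
          _ = (h * g) * (h ^ n * g ^ n) := by group
          _ ≤ (g * h) * (h ^ n * g ^ n) := mul_le_mul_left hgh _
          _ ≤ (g * h) * (g * h) ^ n := mul_le_mul_right l1 _
          _ = (g * h) ^ (n+1) := by rw [← pow_succ']
      · calc (g * h) ^ (n+1) = (g * h) ^ n * (g * h) := pow_succ _ _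
          _ ≤ (g ^ n * h ^ n) * (g * h) := mul_le_mul_left u1 _
          _ = g ^ n * (h ^ n * g) * h := by group
          _ ≤ g ^ n * (g * h ^ n) * h := mul_le_mul_left (mul_le_mul_right (holder_K' hgh n) _) _
          _ = g ^ (n+1) * h ^ (n+1) := by rw [pow_succ' g, pow_succ h]; group
      · calc h ^ (n+1) * g ^ (n+1) = h ^ n * (h * g ^ n) * g := by
              rw [pow_succ h, pow_succ g]; group
          _ ≤ h ^ n * (g ^ n * h) * g := mul_le_mul_left (mul_le_mul_right (holder_K hgh n) _) _
          _ = (h ^ n * g ^ n) * (h * g) := by group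
          _ ≤ (h * g) ^ n * (h * g) := mul_le_mul_left l2 _
          _ = (h * g) ^ (n+1) := (pow_succ _ _).symm
      · calc (h * g) ^ (n+1) = (h * g) * (h * g) ^ n := pow_succ' _ _
          _ ≤ (h * g) * (g ^ n * h ^ n) := mul_le_mul_right u2 _
          _ ≤ (g * h) * (g ^ n * h ^ n) := mul_le_mul_left hgh _
          _ = g * (h * g ^ n) * h ^ n := by group
          _ ≤ g * (g ^ n * h) * h ^ n := mul_le_mul_left (mul_le_mul_right (holder_K hgh n) _) _
          _ = g ^ (n+1) * h ^ (n+1) := by rw [pow_succ' g, pow_succ' h]; group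


private theorem holder_eps {a b : ℝ} (h : ∀ n : ℕ, a ≤ b + 2 / (n + 1)) : a ≤ b := by
  by_contra hc
  push_neg at hc
  obtain ⟨n, hn⟩ := exists_nat_gt (2 / (a - b))
  have hab : 0 < a - b := by linarith
  have h1 : 2 / (a - b) < (n : ℝ) + 1 := by linarith
  have h2 : 2 / ((n : ℝ) + 1) < a - b := by
    have hn1 : (0:ℝ) < (n:ℝ) + 1 := by positivity
    rw [div_lt_iff₀ hn1]
    rw [div_lt_iff₀ hab] at h1
    linarith [h1]
  have := h n
  linarith


private theorem holder_main
    (harch : ∀ g h : G, 1 < g → 1 < h → ∃ n : ℕ, h < g ^ n) {z : G} (hz : 1 < z) :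
    ∃ φ : G → ℝ, (∀ g h : G, φ (g * h) = φ g + φ h) ∧
      Function.Injective φ ∧ ∀ g h : G, g < h → φ g < φ h := by
  choose a hal har using holder_log harch hz
  -- maximality of a
  have amax : ∀ {k : ℤ} {u : G}, z ^ k ≤ u → k ≤ a u := by
    intro k u hk
    by_contra hb
    push_neg at hb
    exact absurd (lt_of_le_of_lt (holder_zpow_le hz (by omega : a u + 1 ≤ k) |>.trans hk)
      (har u)) (lt_irrefl _)
  have aone : a (1 : G) = 0 := by
    have h0 : (0:ℤ) ≤ a 1 := amax (by simp)
    have h1 : a (1:G) ≤ 0 := by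
      by_contra hb
      push_neg at hb
      exact absurd (lt_of_lt_of_le (holder_zpow_lt hz (by omega : (0:ℤ) < a 1)) (hal 1))
        (by simp)
    omega
  -- subadditivity / superadditivity for products
  have key1 : ∀ u v : G, a u + a v ≤ a (u * v) ∧ a (u * v) ≤ a u + a v + 1 := by
    intro u v
    constructor
    · apply amax
      rw [zpow_add]
      exact mul_le_mul' (hal u) (hal v)
    · by_contra hb
      push_neg at hb
      have h1 : u * v < z ^ (a u + a v + 2) := by
        calc u * v < z ^ (a u + 1) * v := mul_lt_mul_left (har u) v
          _ < z ^ (a u + 1) * z ^ (a v + 1) := mul_lt_mul_right (har v) _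
          _ = z ^ (a u + a v + 2) := by rw [← zpow_add]; ring_nf
      exact absurd (lt_of_le_of_lt ((holder_zpow_le hz (by omega : a u + a v + 2 ≤ a (u*v))).trans
        (hal (u*v))) h1) (lt_irrefl _)
  -- f g n = a (g ^ n)
  set f : G → ℕ → ℤ := fun g n => a (g ^ n) with hf
  -- bounds for products
  have key2 : ∀ g h : G, ∀ n : ℕ,
      f g n + f h n ≤ f (g * h) n ∧ f (g * h) n ≤ f g n + f h n + 1 := by
    intro g h n
    have hzz : z ^ (f g n + f h n) ≤ g ^ n * h ^ n ∧ z ^ (f g n + f h n) ≤ h ^ n * g ^ n := by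
      constructor
      · rw [zpow_add]; exact mul_le_mul' (hal _) (hal _)
      · rw [add_comm, zpow_add]; exact mul_le_mul' (hal _) (hal _)
    have hup : g ^ n * h ^ n < z ^ (f g n + f h n + 2) ∧
        h ^ n * g ^ n < z ^ (f g n + f h n + 2) := by
      constructor
      · calc g ^ n * h ^ n < z ^ (f g n + 1) * h ^ n := mul_lt_mul_left (har _) _
          _ < z ^ (f g n + 1) * z ^ (f h n + 1) := mul_lt_mul_right (har _) _
          _ = z ^ (f g n + f h n + 2) := by rw [← zpow_add]; ring_nf
      · calc h ^ n * g ^ n < z ^ (f h n + 1) * g ^ n := mul_lt_mul_left (har _) _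
          _ < z ^ (f h n + 1) * z ^ (f g n + 1) := mul_lt_mul_right (har _) _
          _ = z ^ (f g n + f h n + 2) := by rw [← zpow_add]; ring_nf
    have hbound : z ^ (f g n + f h n) ≤ (g * h) ^ n ∧ (g * h) ^ n < z ^ (f g n + f h n + 2) := by
      rcases le_total (h * g) (g * h) with hc | hc
      · obtain ⟨⟨l1, u1⟩, -⟩ := holder_sandwich hc n
        exact ⟨hzz.2.trans l1, lt_of_le_of_lt u1 hup.1⟩
      · obtain ⟨-, l2, u2⟩ := holder_sandwich (g := h) (h := g) hc n
        exact ⟨hzz.1.trans l2, lt_of_le_of_lt u2 hup.2⟩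
    constructor
    · exact amax hbound.1
    · by_contra hb
      push_neg at hb
      exact absurd (lt_of_le_of_lt ((holder_zpow_le hz
        (by omega : f g n + f h n + 2 ≤ f (g*h) n)).trans (hal _)) hbound.2) (lt_irrefl _)
  -- additivity in n
  have fadd : ∀ g : G, ∀ k m : ℕ, f g k + f g m ≤ f g (k + m) ∧ f g (k + m) ≤ f g k + f g m + 1 := by
    intro g k m
    have := key1 (g ^ k) (g ^ m)
    rwa [← pow_add] at this
  have fzero : ∀ g : G, f g 0 = 0 := fun g => by simp [hf, aone]
  have le1 : ∀ g : G, ∀ m n : ℕ, (n : ℤ) * f g m ≤ f g (n * m) := by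
    intro g m n
    induction n with
    | zero => simp [fzero]
    | succ k ih =>
        have h1 := (fadd g (k * m) m).1
        push_cast
        calc ((k : ℤ) + 1) * f g m = k * f g m + f g m := by ring
          _ ≤ f g (k * m) + f g m := by linarith
          _ ≤ f g (k * m + m) := h1
          _ = f g ((k + 1) * m) := by ring_nf
  have le2 : ∀ g : G, ∀ m n : ℕ, f g (m * n) ≤ (m : ℤ) * f g n + m := by
    intro g m n
    induction m with
    | zero => simp [fzero]
    | succ k ih =>
        have h1 := (fadd g (k * n) n).2
        push_cast
        calc f g ((k + 1) * n) = f g (k * n + n) := by ring_nf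
          _ ≤ f g (k * n) + f g n + 1 := h1
          _ ≤ (k : ℤ) * f g n + k + f g n + 1 := by linarith
          _ = ((k : ℤ) + 1) * f g n + (k + 1) := by ring
  -- the real-valued map
  set S : G → Set ℝ := fun g => {x | ∃ n : ℕ, x = (f g (n + 1) : ℝ) / (n + 1)} with hS
  have hSne : ∀ g : G, (S g).Nonempty := fun g => ⟨(f g 1 : ℝ) / 1, ⟨0, by norm_num⟩⟩
  have cross : ∀ g : G, ∀ m n : ℕ,
      (f g (m + 1) : ℝ) / (m + 1) ≤ ((f g (n + 1) : ℝ) + 1) / (n + 1) := by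
    intro g m n
    have h1 := le1 g (m + 1) (n + 1)
    have h2 := le2 g (m + 1) (n + 1)
    have h3 : ((n : ℤ) + 1) * f g (m + 1) ≤ ((m : ℤ) + 1) * (f g (n + 1) + 1) := by
      have e : (m + 1) * (n + 1) = (n + 1) * (m + 1) := by ring
      rw [e] at h2
      push_cast at h1 h2 ⊢
      nlinarith [h1, h2]
    have hm1 : (0:ℝ) < (m : ℝ) + 1 := by positivity
    have hn1 : (0:ℝ) < (n : ℝ) + 1 := by positivity
    rw [div_le_div_iff₀ hm1 hn1]
    have h4 : ((n : ℝ) + 1) * (f g (m + 1) : ℝ) ≤ ((m : ℝ) + 1) * ((f g (n + 1) : ℝ) + 1) := by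
      exact_mod_cast h3
    linarith
  have hbdd : ∀ g : G, BddAbove (S g) := by
    intro g
    refine ⟨((f g 1 : ℝ) + 1) / 1, fun x hx => ?_⟩
    obtain ⟨m, rfl⟩ := hx
    simpa using cross g m 0
  set φ : G → ℝ := fun g => sSup (S g) with hφ
  have philow : ∀ g : G, ∀ n : ℕ, (f g (n + 1) : ℝ) / (n + 1) ≤ φ g :=
    fun g n => le_csSup (hbdd g) ⟨n, rfl⟩
  have phihigh : ∀ g : G, ∀ n : ℕ, φ g ≤ ((f g (n + 1) : ℝ) + 1) / (n + 1) := by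
    intro g n
    apply csSup_le (hSne g)
    rintro x ⟨m, rfl⟩
    exact cross g m n
  -- additivity
  have hadd : ∀ g h : G, φ (g * h) = φ g + φ h := by
    intro g h
    have hn1 : ∀ n : ℕ, (0:ℝ) < (n : ℝ) + 1 := fun n => by positivity
    have hup : ∀ n : ℕ, φ (g * h) ≤ φ g + φ h + 2 / (n + 1) := by
      intro n
      have k2 := (key2 g h (n + 1)).2
      have hg' : (f g (n+1) : ℝ) ≤ ((n:ℝ) + 1) * φ g := by
        have := philow g n
        rw [div_le_iff₀ (hn1 n)] at this
        linarith
      have hh' : (f h (n+1) : ℝ) ≤ ((n:ℝ) + 1) * φ h := by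
        have := philow h n
        rw [div_le_iff₀ (hn1 n)] at this
        linarith
      have k2' : (f (g*h) (n+1) : ℝ) ≤ (f g (n+1) : ℝ) + (f h (n+1)) + 1 := by exact_mod_cast k2
      calc φ (g * h) ≤ ((f (g*h) (n+1) : ℝ) + 1) / (n + 1) := phihigh _ n
        _ ≤ (((n:ℝ)+1) * φ g + ((n:ℝ)+1) * φ h + 2) / (n + 1) := by
            have hnum : (f (g*h) (n+1) : ℝ) + 1 ≤ ((n:ℝ)+1) * φ g + ((n:ℝ)+1) * φ h + 2 := by
              linarith
            gcongr
        _ = φ g + φ h + 2 / (n + 1) := by field_simp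
    have hdown : ∀ n : ℕ, φ g + φ h ≤ φ (g * h) + 2 / (n + 1) := by
      intro n
      have k2 := (key2 g h (n + 1)).1
      have hgh' : (f (g*h) (n+1) : ℝ) ≤ ((n:ℝ) + 1) * φ (g*h) := by
        have := philow (g*h) n
        rw [div_le_iff₀ (hn1 n)] at this
        linarith
      have hg' : ((n:ℝ)+1) * φ g ≤ (f g (n+1) : ℝ) + 1 := by
        have := phihigh g n
        rw [le_div_iff₀ (hn1 n)] at this
        linarith
      have hh' : ((n:ℝ)+1) * φ h ≤ (f h (n+1) : ℝ) + 1 := by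
        have := phihigh h n
        rw [le_div_iff₀ (hn1 n)] at this
        linarith
      have k2' : (f g (n+1) : ℝ) + (f h (n+1)) ≤ (f (g*h) (n+1) : ℝ) := by exact_mod_cast k2
      have e : ((n:ℝ)+1) * (2/((n:ℝ)+1)) = 2 := by
        field_simp
      have hfinal : ((n:ℝ)+1) * (φ g + φ h) ≤ ((n:ℝ)+1) * (φ (g*h) + 2/((n:ℝ)+1)) := by
        have e2 : ((n:ℝ)+1) * (φ (g*h) + 2/((n:ℝ)+1)) = ((n:ℝ)+1) * φ (g*h) + 2 := by
          rw [mul_add, e]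
        rw [e2]
        nlinarith [hgh', hg', hh', k2']
      exact le_of_mul_le_mul_left hfinal (hn1 n)
    refine le_antisymm (holder_eps hup) ?_
    have := holder_eps hdown
    linarith [this]
  -- positivity
  have hpos : ∀ g : G, 1 < g → 0 < φ g := by
    intro g hg
    obtain ⟨n, hn⟩ := harch g z hg hz
    rcases n with _ | m
    · exact absurd hn (by simpa using not_lt.mpr hz.le)
    · have h1 : (1:ℤ) ≤ f g (m + 1) := by
        apply amax
        rw [zpow_one]
        exact hn.le
      have h2 := philow g m
      have : (0:ℝ) < (f g (m+1) : ℝ) / (m + 1) := by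
        apply div_pos
        · exact_mod_cast lt_of_lt_of_le zero_lt_one (by exact_mod_cast h1)
        · positivity
      linarith
  have hone : φ 1 = 0 := by
    have := hadd 1 1
    rw [mul_one] at this
    linarith
  have hmono : ∀ g h : G, g < h → φ g < φ h := by
    intro g h hgh
    have h1 : (1:G) < g⁻¹ * h := by
      have := mul_lt_mul_right hgh g⁻¹
      rwa [inv_mul_cancel] at this
    have h2 := hpos _ h1
    have h3 : φ h = φ g + φ (g⁻¹ * h) := by
      have := hadd g (g⁻¹ * h)
      rwa [mul_inv_cancel_left] at this
    linarith
  refine ⟨φ, hadd, ?_, hmono⟩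
  intro g h hgh
  rcases lt_trichotomy g h with hc | hc | hc
  · exact absurd hgh (ne_of_lt (hmono _ _ hc))
  · exact hc
  · exact absurd hgh.symm (ne_of_lt (hmono _ _ hc))

end HolderAux2

/-- Hölder's theorem: a group with an Archimedean left-invariant
linear order embeds, in an order-preserving way, into the additive reals. -/
theorem holder_theorem {G : Type*} [Group G] (r : G → G → Prop)
    (hord : IsStrictTotalOrder G r)
    (hleft : ∀ f g h : G, r g h → r (f * g) (f * h))
    (harch : ∀ g h : G, r 1 g → r 1 h → ∃ n : ℕ, r h (g ^ n)) :
    ∃ φ : G → ℝ, (∀ g h : G, φ (g * h) = φ g + φ h) ∧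
      Function.Injective φ ∧ ∀ g h : G, r g h → φ g < φ h := by
  haveI := hord
  letI : DecidableRel r := fun a b => Classical.dec _
  letI : LinearOrder G := linearOrderOfSTO r
  have hleft' : ∀ f g h : G, g < h → f * g < f * h := hleft
  have harch' : ∀ g h : G, 1 < g → 1 < h → ∃ n : ℕ, h < g ^ n := harch
  haveI covL : CovariantClass G G (· * ·) (· < ·) := ⟨fun f _ _ h => hleft' f _ _ h⟩
  haveI covR : CovariantClass G G (Function.swap (· * ·)) (· < ·) := by
    refine ⟨fun c a b hab => ?_⟩
    have h1 : (1:G) < a⁻¹ * b := by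
      have := hleft' a⁻¹ _ _ hab; rwa [inv_mul_cancel] at this
    have h2 := holder_biinv hleft' harch' (a⁻¹ * b) c h1
    have h3 := hleft' (a * c) _ _ h2
    have e : a * c * (c⁻¹ * (a⁻¹ * b) * c) = b * c := by group
    rw [mul_one, e] at h3
    exact h3
  haveI : CovariantClass G G (· * ·) (· ≤ ·) := covariantClass_le_of_lt _ _ _
  haveI : CovariantClass G G (Function.swap (· * ·)) (· ≤ ·) := covariantClass_le_of_lt _ _ _
  by_cases hex : ∃ z : G, 1 < z
  · obtain ⟨z, hz⟩ := hex
    exact holder_main harch' hz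
  · push_neg at hex
    have hnolt : ∀ g h : G, ¬ g < h := by
      intro g h hgh
      have h1 : (1:G) < g⁻¹ * h := by
        have := hleft' g⁻¹ _ _ hgh; rwa [inv_mul_cancel] at this
      exact absurd h1 (not_lt.mpr (hex _))
    refine ⟨fun _ => 0, by simp, ?_, fun g h hgh => absurd hgh (hnolt g h)⟩
    intro g h _
    exact le_antisymm (not_lt.mp (hnolt h g)) (not_lt.mp (hnolt g h))
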